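/- (Soundness of Chase Start for typed dependencies.) Let T be a finite typed relation over R (no value of T occurs in two distinct columns of T), let Ā list R, and let r be a non-empty relation over a finite attribute set R' ⊇ R with R' ∩ Val(T) = ∅. Then the relation r'' := r ⋈ q(r), where q(r) := ⋈_{t∈T} ρ_{t(Ā)/Ā}(r|_R) is the join of the copies of r|_R renamed along A ↦ t(A) for each t ∈ T, is an extension of r to R' ∪ Val(T) (r''|_{R'} = r) that satisfies ⋀_{t∈T} Ā ⊆ t(Ā) ∧ ⋈(t(Ā))_{t∈T} ∧ ⋀_{t∈T} t(Ā) ⊆ Ā. -/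

import Mathlib

namespace EmbeddedDependencies

noncomputable section
open Classical

/- Values and attributes coincide; we take them to be natural numbers
   (a countably infinite set, with its total well-founded order `<`). -/
abbrev Val := ℕ

/-- A tuple over an attribute set `R` is (canonically encoded as) a total function
    `Val → Val`; only its values on `R` matter. -/
abbrev Tuple := Val → Val

/-- A relation is a set of tuples. -/
abbrev Rel := Set Tuple

/-- Canonical restriction of a tuple to the attribute set `R` (default value `0` outside `R`). -/
def restrictT (R : Set Val) (t : Tuple) : Tuple := fun a => if a ∈ R then t a else 0

/-- Restriction `r|_R` of a relation `r` to the attribute set `R`. -/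
def restrictR (R : Set Val) (r : Rel) : Rel := (restrictT R) '' r

/-- `Val(T)`: the set of values occurring in the relation `T` over the attribute set `R`. -/
def valsOf (R : Set Val) (T : Rel) : Set Val := {v | ∃ t ∈ T, ∃ a ∈ R, t a = v}

/-- `f(T) ⊆ r|_R` for a valuation `f : Val → Val`. -/
def Embeds (R : Set Val) (f : Val → Val) (T r : Rel) : Prop :=
  ∀ t ∈ T, restrictT R (f ∘ t) ∈ restrictR R r

/-- Satisfaction of the egd `(T, x = y)` over `R` by the relation `r`:
    every valuation `f` with `f(T) ⊆ r|_R` satisfies `f x = f y`. -/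
def egdSat (R : Set Val) (T : Rel) (x y : Val) (r : Rel) : Prop :=
  ∀ f : Val → Val, Embeds R f T r → f x = f y

/-- Satisfaction of the tgd `(T, T')` over `R` by the relation `r`: every valuation `f`
    (on `Val(T)`) with `f(T) ⊆ r|_R` has an extension `g` to `Val(T')`, agreeing with `f`
    on `Val(T) ∩ Val(T')`, with `g(T') ⊆ r|_R`. -/
def tgdSat (R : Set Val) (T T' : Rel) (r : Rel) : Prop :=
  ∀ f : Val → Val, Embeds R f T r →
    ∃ g : Val → Val, (∀ v ∈ valsOf R T ∩ valsOf R T', g v = f v) ∧ Embeds R g T' r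

/-- Satisfaction of the inclusion dependency `A_1 … A_n ⊆ B_1 … B_n` by the relation `r`. -/
def indSat (A B : List Val) (r : Rel) : Prop :=
  ∀ s ∈ r, ∃ s' ∈ r, A.map s = B.map s'

/-- `A` is a sequence listing the attribute set `R`. -/
def ListsR (A : List Val) (R : Set Val) : Prop := A.Nodup ∧ ∀ a, a ∈ A ↔ a ∈ R

/-- Satisfaction of an embedded join dependency, given by the family `Rs` of attribute
sets of its components: `r|_{⋃Rs}` equals the natural join of the `r|_{R_i}`. -/
def ejdSat (Rs : Set (Set Val)) (r : Rel) : Prop :=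
  restrictR (⋃₀ Rs) r =
    restrictR (⋃₀ Rs) {u : Tuple | ∀ Ri ∈ Rs, restrictT Ri u ∈ restrictR Ri r}

/-- (Soundness of Chase Start for typed dependencies.) For a typed
finite relation `T` over `R` with new values, the extension `r ⋈ q(r)` of `r`, where
`q(r)` is the join of the copies of `r|_R` renamed along `A ↦ t(A)` for `t ∈ T`,
satisfies `⋀_{t∈T} Ā ⊆ t(Ā) ∧ ⋈(t(Ā))_{t∈T} ∧ ⋀_{t∈T} t(Ā) ⊆ Ā`. -/
theorem chase_start_typed_sound
    (R : Set Val) (hR : R.Finite) (A : List Val) (hA : ListsR A R)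
    (T : Rel) (hTfin : T.Finite) (hTc : restrictR R T = T)
    (htyped : ∀ t ∈ T, ∀ t' ∈ T, ∀ a ∈ R, ∀ b ∈ R, t a = t' b → a = b)
    (R' : Set Val) (hR' : R'.Finite) (hRR' : R ⊆ R')
    (hdisj : R' ∩ valsOf R T = ∅)
    (r : Rel) (hne : r.Nonempty) (hr : restrictR R' r = r)
    -- `q(r)`: the join over `t ∈ T` of the renamed copies `ρ_{t(Ā)/Ā}(r|_R)`
    (qr : Rel)
    (hqr : qr = restrictR (valsOf R T)
      {u : Tuple | ∀ t ∈ T, ∃ s ∈ r, ∀ a ∈ R, u (t a) = s a})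
    -- `r'' = r ⋈ q(r)`
    (r'' : Rel)
    (hr'' : r'' = {w : Tuple | restrictT (R' ∪ valsOf R T) w = w ∧
      restrictT R' w ∈ r ∧ restrictT (valsOf R T) w ∈ qr}) :
    restrictR R' r'' = r ∧
    (∀ t ∈ T, indSat A (A.map t) r'') ∧
    ejdSat {Ri | ∃ t ∈ T, Ri = {v | ∃ a ∈ R, t a = v}} r'' ∧
    (∀ t ∈ T, indSat (A.map t) A r'') := by

  -- basic facts
  have hvR' : ∀ v ∈ valsOf R T, v ∉ R' := by
    intro v hv hv'
    exact absurd (Set.mem_inter hv' hv) (by rw [hdisj]; exact Set.notMem_empty v)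
  have hsupp_r : ∀ s ∈ r, ∀ x, x ∉ R' → s x = 0 := by
    intro s hs x hx
    rw [← hr] at hs
    obtain ⟨s1, _, rfl⟩ := hs
    simp [restrictT, hx]
  have hsupp_qr : ∀ u ∈ qr, ∀ x, x ∉ valsOf R T → u x = 0 := by
    intro u hu x hx
    rw [hqr] at hu
    obtain ⟨u0, _, rfl⟩ := hu
    simp [restrictT, hx]
  have hattr : ∀ v ∈ valsOf R T, ∃ a, a ∈ R ∧ ∃ t ∈ T, t a = v := by
    intro v hv
    obtain ⟨t, ht, a, ha, hta⟩ := hv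
    exact ⟨a, ha, t, ht, hta⟩
  -- for each s ∈ r, a canonical element of qr matching s
  have hus : ∀ s ∈ r, ∃ u ∈ qr, ∀ t ∈ T, ∀ a ∈ R, u (t a) = s a := by
    intro s hs
    refine ⟨fun v => if h : v ∈ valsOf R T then s ((hattr v h).choose) else 0, ?_, ?_⟩
    · have huval : ∀ t ∈ T, ∀ a ∈ R,
          (fun v => if h : v ∈ valsOf R T then s ((hattr v h).choose) else 0) (t a) = s a := by
        intro t ht a ha
        have hv : t a ∈ valsOf R T := ⟨t, ht, a, ha, rfl⟩
        simp only [dif_pos hv]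
        congr 1
        obtain ⟨ha', t', ht', hta'⟩ := (hattr _ hv).choose_spec
        exact htyped t' ht' t ht _ ha' a ha hta'
      rw [hqr]
      refine ⟨fun v => if h : v ∈ valsOf R T then s ((hattr v h).choose) else 0,
        fun t ht => ⟨s, hs, fun a ha => huval t ht a ha⟩, ?_⟩
      funext v
      by_cases hv : v ∈ valsOf R T
      · simp [restrictT, hv]
      · simp [restrictT, hv]
    · intro t ht a ha
      have hv : t a ∈ valsOf R T := ⟨t, ht, a, ha, rfl⟩
      simp only [dif_pos hv]
      congr 1
      obtain ⟨ha', t', ht', hta'⟩ := (hattr _ hv).choose_spec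
      exact htyped t' ht' t ht _ ha' a ha hta'
  -- combining an element of r and an element of qr gives an element of r''
  have hcomb : ∀ s ∈ r, ∀ u ∈ qr, ∃ w ∈ r'',
      restrictT R' w = s ∧ ∀ v ∈ valsOf R T, w v = u v := by
    intro s hs u hu
    set w : Tuple := fun x => if x ∈ R' then s x else if x ∈ valsOf R T then u x else 0 with hwdef
    have hwR' : restrictT R' w = s := by
      funext x
      by_cases hx : x ∈ R'
      · simp [restrictT, hx, hwdef]
      · simp only [restrictT, if_neg hx]
        exact (hsupp_r s hs x hx).symm
    have hwV : restrictT (valsOf R T) w = u := by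
      funext x
      by_cases hx : x ∈ valsOf R T
      · simp [restrictT, hx, hwdef, hvR' x hx]
      · simp only [restrictT, if_neg hx]
        exact (hsupp_qr u hu x hx).symm
    refine ⟨w, ?_, hwR', ?_⟩
    · rw [hr'']
      refine ⟨?_, by rw [hwR']; exact hs, by rw [hwV]; exact hu⟩
      funext x
      by_cases hx : x ∈ R' ∪ valsOf R T
      · simp [restrictT, hx]
      · rw [Set.mem_union] at hx
        push_neg at hx
        simp [restrictT, hx.1, hx.2, hwdef, Set.mem_union]
    · intro v hv
      simp [hwdef, hvR' v hv, hv]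
  -- extraction: any w ∈ r'' agrees on t(R) with some element of r (composed with t)
  have hext : ∀ w ∈ r'', ∀ t ∈ T, ∃ s ∈ r, ∀ a ∈ R, w (t a) = s a := by
    intro w hw t ht
    rw [hr''] at hw
    have hu : restrictT (valsOf R T) w ∈ qr := hw.2.2
    rw [hqr] at hu
    obtain ⟨u0, hu0, hequ⟩ := hu
    obtain ⟨s, hs, hval⟩ := hu0 t ht
    refine ⟨s, hs, fun a ha => ?_⟩
    have hv : t a ∈ valsOf R T := ⟨t, ht, a, ha, rfl⟩
    have h1 : restrictT (valsOf R T) w (t a) = w (t a) := by simp [restrictT, hv]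
    have h2 : restrictT (valsOf R T) u0 (t a) = u0 (t a) := by simp [restrictT, hv]
    rw [← h1, ← hequ, h2, hval a ha]
  have hwr : ∀ w ∈ r'', restrictT R' w ∈ r := by
    intro w hw; rw [hr''] at hw; exact hw.2.1
  refine ⟨?_, ?_, ?_, ?_⟩
  · -- restrictR R' r'' = r
    apply Set.Subset.antisymm
    · rintro x ⟨w, hw, rfl⟩
      exact hwr w hw
    · intro s hs
      obtain ⟨u, hu, _⟩ := hus s hs
      obtain ⟨w, hw, hres, _⟩ := hcomb s hs u hu
      exact ⟨w, hw, hres⟩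
  · -- indSat A (A.map t)
    intro t ht w hw
    have hs : restrictT R' w ∈ r := hwr w hw
    obtain ⟨u, hu, huval⟩ := hus _ hs
    obtain ⟨w', hw', hres, hval⟩ := hcomb _ hs u hu
    refine ⟨w', hw', ?_⟩
    rw [List.map_map]
    apply List.map_congr_left
    intro a haA
    have ha : a ∈ R := (hA.2 a).mp haA
    have hv : t a ∈ valsOf R T := ⟨t, ht, a, ha, rfl⟩
    have : w' (t a) = u (t a) := hval _ hv
    rw [Function.comp_apply, this, huval t ht a ha]
    simp [restrictT, hRR' ha]
  · -- ejdSat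
    have hS : ⋃₀ {Ri | ∃ t ∈ T, Ri = {v | ∃ a ∈ R, t a = v}} = valsOf R T := by
      ext v
      constructor
      · rintro ⟨Ri, ⟨t, ht, rfl⟩, a, ha, hta⟩
        exact ⟨t, ht, a, ha, hta⟩
      · rintro ⟨t, ht, a, ha, hta⟩
        exact ⟨{v | ∃ a ∈ R, t a = v}, ⟨t, ht, rfl⟩, a, ha, hta⟩
    unfold ejdSat
    rw [hS]
    apply Set.Subset.antisymm
    · rintro x ⟨w, hw, rfl⟩
      exact ⟨w, fun Ri _ => ⟨w, hw, rfl⟩, rfl⟩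
    · rintro x ⟨u, hu, rfl⟩
      have hubar : restrictT (valsOf R T) u ∈ qr := by
        rw [hqr]
        refine ⟨restrictT (valsOf R T) u, ?_, ?_⟩
        · intro t ht
          have hRi : {v | ∃ a ∈ R, t a = v} ∈
              {Ri | ∃ t ∈ T, Ri = {v | ∃ a ∈ R, t a = v}} := ⟨t, ht, rfl⟩
          obtain ⟨wt, hwt, heq⟩ := hu _ hRi
          obtain ⟨s, hs, hval⟩ := hext wt hwt t ht
          refine ⟨s, hs, fun a ha => ?_⟩
          have hv : t a ∈ valsOf R T := ⟨t, ht, a, ha, rfl⟩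
          have hvi : t a ∈ {v | ∃ a ∈ R, t a = v} := ⟨a, ha, rfl⟩
          have h1 : restrictT (valsOf R T) u (t a) = u (t a) := by simp [restrictT, hv]
          have h2 : restrictT {v | ∃ a ∈ R, t a = v} u (t a) = u (t a) := by
            simp [restrictT, hvi]
          have h3 : restrictT {v | ∃ a ∈ R, t a = v} wt (t a) = wt (t a) := by
            simp [restrictT, hvi]
          rw [h1, ← h2, ← heq, h3, hval a ha]
        · funext v
          by_cases hv : v ∈ valsOf R T <;> simp [restrictT, hv]
      obtain ⟨s0, hs0⟩ := hne
      obtain ⟨w, hw, _, hval⟩ := hcomb s0 hs0 _ hubar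
      refine ⟨w, hw, ?_⟩
      funext v
      by_cases hv : v ∈ valsOf R T
      · have := hval v hv
        simp only [restrictT, if_pos hv] at this ⊢
        rw [this]
      · simp [restrictT, hv]
  · -- indSat (A.map t) A
    intro t ht w hw
    obtain ⟨s, hs, hval⟩ := hext w hw t ht
    obtain ⟨u, hu, _⟩ := hus s hs
    obtain ⟨w', hw', hres, _⟩ := hcomb s hs u hu
    refine ⟨w', hw', ?_⟩
    rw [List.map_map]
    apply List.map_congr_left
    intro a haA
    have ha : a ∈ R := (hA.2 a).mp haA
    have : w' a = s a := by
      have := congrFun hres a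
      simpa [restrictT, hRR' ha] using this
    rw [Function.comp_apply, hval a ha, this]


end
end EmbeddedDependencies
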